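/- Let p be a prime and a, b, a′, b′ ≥ 0 integers. Then p^a·L(p^b) ∩ p^{a′}·L(p^{b′}) = p^{max(a,a′)}·L(p^{max(a+b, a′+b′) − max(a,a′)}) as ℤ-submodules of V. -/

import Mathlib

open Pointwise

/-- The matrix by which the adjacent transposition `(k k+1)` acts:
`E^{k,k-1} + 2 E^{k,k} + E^{k,k+1} - I_n` (indices `1,…,n` in the paper,
here shifted to `0,…,n-1`; out-of-range `E^{i,j}` are `0`). -/
def craigA (n : ℕ) (k : Fin n) : Matrix (Fin n) (Fin n) ℚ :=
  Matrix.of fun i j =>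
    (if (i : ℕ) = (k : ℕ) ∧ (j : ℕ) + 1 = (k : ℕ) then 1 else 0)
    + (if (i : ℕ) = (k : ℕ) ∧ (j : ℕ) = (k : ℕ) then 2 else 0)
    + (if (i : ℕ) = (k : ℕ) ∧ (j : ℕ) = (k : ℕ) + 1 then 1 else 0)
    - (if i = j then 1 else 0)

/-- `v = e_n + Σ_{i=1}^{n-1} (-1)^{n+1-i} i e_i` (with `e_i` the standard basis,
shifted to `0`-based indexing). -/
def craigV (n : ℕ) : Fin n → ℚ :=
  fun j => if (j : ℕ) = n - 1 then 1 else (-1 : ℚ) ^ (n - (j : ℕ)) * ((j : ℕ) + 1)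

/-- `L(d) = (⊕_{i=1}^{n-1} ℤ·d·e_i) ⊕ ℤ·v` as a `ℤ`-submodule of `ℚ^n`. -/
def craigL (n : ℕ) (d : ℕ) : Submodule ℤ (Fin n → ℚ) :=
  Submodule.span ℤ
    (insert (craigV n) {x | ∃ j : Fin n, (j : ℕ) < n - 1 ∧ x = (d : ℚ) • (Pi.single j 1 : Fin n → ℚ)})

/-- A `ℤ`-submodule is invariant under the action `ρ` of `𝔖_{n+1}`. -/
def Invar {n : ℕ} (ρ : Equiv.Perm (Fin (n + 1)) →* Matrix (Fin n) (Fin n) ℚ)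
    (N : Submodule ℤ (Fin n → ℚ)) : Prop :=
  ∀ g : Equiv.Perm (Fin (n + 1)), ∀ x ∈ N, (ρ g).mulVec x ∈ N

/-- `N` is a `ℤG`-sublattice of `M`. -/
def IsSubl {n : ℕ} (ρ : Equiv.Perm (Fin (n + 1)) →* Matrix (Fin n) (Fin n) ℚ)
    (M N : Submodule ℤ (Fin n → ℚ)) : Prop :=
  N ≤ M ∧ Invar ρ N

/-- The index `|M : N|` of `N` in `M` as additive subgroups (`0` if infinite). -/
noncomputable def subIndex {n : ℕ} (N M : Submodule ℤ (Fin n → ℚ)) : ℕ :=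
  AddSubgroup.relIndex N.toAddSubgroup M.toAddSubgroup

/-- Isomorphism of `ℤG`-lattices: a `ℤ`-linear isomorphism commuting with the
action of every `ρ g`. -/
def IsZGIso {n : ℕ} (ρ : Equiv.Perm (Fin (n + 1)) →* Matrix (Fin n) (Fin n) ℚ)
    (N N' : Submodule ℤ (Fin n → ℚ)) : Prop :=
  ∃ e : N ≃ₗ[ℤ] N',
    ∀ (g : Equiv.Perm (Fin (n + 1))) (x : N)
      (hx : (ρ g).mulVec (x : Fin n → ℚ) ∈ N),
      ((e ⟨(ρ g).mulVec (x : Fin n → ℚ), hx⟩ : N') : Fin n → ℚ)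
        = (ρ g).mulVec ((e x : N') : Fin n → ℚ)

/-- `N` is a `p`-maximal sublattice of `M`: a maximal element of the set of
proper `ℤG`-sublattices of `M` containing `p·M`. -/
def IsPMaximal {n : ℕ} (ρ : Equiv.Perm (Fin (n + 1)) →* Matrix (Fin n) (Fin n) ℚ)
    (p : ℕ) (M N : Submodule ℤ (Fin n → ℚ)) : Prop :=
  (IsSubl ρ M N ∧ N ≠ M ∧ (p : ℚ) • M ≤ N) ∧
    ∀ N' : Submodule ℤ (Fin n → ℚ),
      IsSubl ρ M N' → N' ≠ M → (p : ℚ) • M ≤ N' → N ≤ N' → N' = N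

/-- `rad_p(M)`: the intersection of all `p`-maximal sublattices of `M`. -/
def radP {n : ℕ} (ρ : Equiv.Perm (Fin (n + 1)) →* Matrix (Fin n) (Fin n) ℚ)
    (p : ℕ) (M : Submodule ℤ (Fin n → ℚ)) : Submodule ℤ (Fin n → ℚ) :=
  sInf {N | IsPMaximal ρ p M N}

/-- `Φ_p(M)`: the `ℤG`-sublattices `L` of `M` with `rad_p(M) ⊆ L ⊆ M`. -/
def PhiP {n : ℕ} (ρ : Equiv.Perm (Fin (n + 1)) →* Matrix (Fin n) (Fin n) ℚ)
    (p : ℕ) (M : Submodule ℤ (Fin n → ℚ)) : Set (Submodule ℤ (Fin n → ℚ)) :=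
  {L | IsSubl ρ M L ∧ radP ρ p M ≤ L}

/-- `μ_p(M, L) = Σ_J (-1)^{|J|}` over subsets `J` of `max_p(M)` with
`∩_{N ∈ J} N = L` (the empty intersection being `M`). -/
noncomputable def muP {n : ℕ}
    (ρ : Equiv.Perm (Fin (n + 1)) →* Matrix (Fin n) (Fin n) ℚ)
    (p : ℕ) (M L : Submodule ℤ (Fin n → ℚ)) : ℤ :=
  ∑ᶠ J ∈ {J : Finset (Submodule ℤ (Fin n → ℚ)) |
      (∀ N ∈ J, IsPMaximal ρ p M N) ∧ M ⊓ J.inf id = L},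
    (-1 : ℤ) ^ J.card


lemma mem_span_gen_iff {n : ℕ} (hn : 2 ≤ n) (q t : ℚ) (x : Fin n → ℚ) :
    x ∈ Submodule.span ℤ
      (insert (q • craigV n)
        {y | ∃ j : Fin n, (j : ℕ) < n - 1 ∧ y = t • (Pi.single j 1 : Fin n → ℚ)}) ↔
    (∃ c : ℤ, x ⟨n-1, by omega⟩ = c * q) ∧
      ∀ j : Fin n, (j : ℕ) < n - 1 →
        ∃ m : ℤ, x j - x ⟨n-1, by omega⟩ * craigV n j = m * t := by
  have hL : ((⟨n-1, by omega⟩ : Fin n) : ℕ) = n - 1 := rfl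
  have hvL : craigV n ⟨n-1, by omega⟩ = 1 := by simp [craigV]
  constructor
  · intro hx
    induction hx using Submodule.span_induction with
    | mem y hy =>
      rcases hy with rfl | ⟨j0, hj0, rfl⟩
      · refine ⟨⟨1, ?_⟩, fun j hj => ⟨0, ?_⟩⟩
        · simp only [Pi.smul_apply, smul_eq_mul, hvL]; push_cast; ring
        · simp only [Pi.smul_apply, smul_eq_mul, hvL]; push_cast; ring
      · have hL0 : (⟨n-1, by omega⟩ : Fin n) ≠ j0 := by
          intro h; rw [h] at hL; omega
        have h0 : (t • (Pi.single j0 1 : Fin n → ℚ)) ⟨n-1, by omega⟩ = 0 := by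
          simp [Pi.single_apply, hL0]
        refine ⟨⟨0, by simp [h0]⟩, fun j hj => ?_⟩
        by_cases hjj : j = j0
        · exact ⟨1, by subst hjj; simp [h0, Pi.single_apply]⟩
        · exact ⟨0, by simp [h0, Pi.single_apply, hjj]⟩
    | zero => exact ⟨⟨0, by simp⟩, fun j hj => ⟨0, by simp⟩⟩
    | add y z hy hz ihy ihz =>
      obtain ⟨⟨c1, h1⟩, hm1⟩ := ihy
      obtain ⟨⟨c2, h2⟩, hm2⟩ := ihz
      refine ⟨⟨c1 + c2, by simp [h1, h2]; push_cast; ring⟩, fun j hj => ?_⟩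
      obtain ⟨m1, hm1'⟩ := hm1 j hj
      obtain ⟨m2, hm2'⟩ := hm2 j hj
      exact ⟨m1 + m2, by simp only [Pi.add_apply]; push_cast; linear_combination hm1' + hm2'⟩
    | smul r y hy ihy =>
      obtain ⟨⟨c1, h1⟩, hm1⟩ := ihy
      refine ⟨⟨r * c1, by simp [h1, zsmul_eq_mul]; push_cast; ring⟩, fun j hj => ?_⟩
      obtain ⟨m1, hm1'⟩ := hm1 j hj
      exact ⟨r * m1, by simp only [Pi.smul_apply, zsmul_eq_mul]; push_cast; linear_combination (r : ℚ) * hm1'⟩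
  · rintro ⟨⟨c, hc⟩, hcond⟩
    choose m hm using hcond
    have hx : x = (c : ℤ) • (q • craigV n)
        + ∑ j : Fin n, (if h : (j : ℕ) < n - 1 then m j h else 0) •
            (t • (Pi.single j 1 : Fin n → ℚ)) := by
      funext i
      have hsum : ∀ z : ℤ, (if h : (i : ℕ) < n - 1 then m i h else 0) = z →
          (∑ j : Fin n, (if h : (j : ℕ) < n - 1 then m j h else 0) •
            (t • (Pi.single j 1 : Fin n → ℚ))) i = (z : ℚ) * t := by
        intro z hz
        rw [Finset.sum_apply, Finset.sum_eq_single i]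
        · rw [hz]; simp [zsmul_eq_mul]
        · intro j _ hji
          simp [Pi.single_apply, hji.symm]
        · simp
      by_cases hi : (i : ℕ) < n - 1
      · have hs := hsum (m i hi) (dif_pos hi)
        simp only [Pi.add_apply]
        rw [hs]
        simp only [Pi.smul_apply, zsmul_eq_mul, smul_eq_mul]
        have h1 := hm i hi
        have hiL : x ⟨n-1, by omega⟩ = c * q := hc
        linear_combination h1 + craigV n i * hiL
      · have hs := hsum 0 (dif_neg hi)
        simp only [Pi.add_apply]
        rw [hs]
        simp only [Pi.smul_apply, zsmul_eq_mul, smul_eq_mul]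
        have hieq : i = ⟨n-1, by omega⟩ := Fin.ext (by have := i.isLt; omega)
        rw [hieq, hvL, hc]
        push_cast; ring
    rw [hx]
    refine Submodule.add_mem _ (Submodule.smul_mem _ _ (Submodule.subset_span (Set.mem_insert _ _))) ?_
    refine Submodule.sum_mem _ fun j _ => ?_
    by_cases hj : (j : ℕ) < n - 1
    · exact Submodule.smul_mem _ _ (Submodule.subset_span (Set.mem_insert_of_mem _ ⟨j, hj, rfl⟩))
    · rw [dif_neg hj, zero_smul]; exact Submodule.zero_mem _

lemma smul_craigL_eq {n : ℕ} (q : ℚ) (d : ℕ) :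
    q • craigL n d = Submodule.span ℤ
      (insert (q • craigV n)
        {y | ∃ j : Fin n, (j : ℕ) < n - 1 ∧ y = (q * (d : ℚ)) • (Pi.single j 1 : Fin n → ℚ)}) := by
  rw [craigL, Submodule.smul_span]
  congr 1
  rw [Set.smul_set_insert]
  congr 1
  ext y
  constructor
  · rintro ⟨z, ⟨j, hj, rfl⟩, rfl⟩
    exact ⟨j, hj, by simp [smul_smul]⟩
  · rintro ⟨j, hj, rfl⟩
    exact ⟨(d : ℚ) • (Pi.single j 1 : Fin n → ℚ), ⟨j, hj, rfl⟩, by simp [smul_smul]⟩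

lemma mem_smul_craigL_iff {n : ℕ} (hn : 2 ≤ n) (q : ℚ) (d : ℕ) (x : Fin n → ℚ) :
    x ∈ q • craigL n d ↔
    (∃ c : ℤ, x ⟨n-1, by omega⟩ = c * q) ∧
      ∀ j : Fin n, (j : ℕ) < n - 1 →
        ∃ m : ℤ, x j - x ⟨n-1, by omega⟩ * craigV n j = m * (q * d) := by
  rw [smul_craigL_eq, mem_span_gen_iff hn]

lemma pow_div_lemma (p : ℕ) {k k' : ℕ} (h : k ≤ k') {r : ℚ}
    (hr : ∃ c : ℤ, r = c * (p : ℚ) ^ k') : ∃ c : ℤ, r = c * (p : ℚ) ^ k := by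
  obtain ⟨c, rfl⟩ := hr
  exact ⟨c * p ^ (k' - k), by push_cast; rw [mul_assoc, ← pow_add]; congr 2; omega⟩

/-- Lemma 2(1): `p^a·L(p^b) ∩ p^{a'}·L(p^{b'})
= p^{max(a,a')}·L(p^{max(a+b,a'+b') - max(a,a')})`. -/
theorem inter_of_scaled_L (n : ℕ) (hn : 2 ≤ n)
    (p : ℕ) (hp : p.Prime) (a b a' b' : ℕ) :
    (((p : ℚ) ^ a) • craigL n (p ^ b)) ⊓ (((p : ℚ) ^ a') • craigL n (p ^ b'))
      = ((p : ℚ) ^ (max a a')) •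
          craigL n (p ^ (max (a + b) (a' + b') - max a a')) := by
  have key : ∀ u v : ℕ, (p : ℚ) ^ u * ((p ^ v : ℕ) : ℚ) = (p : ℚ) ^ (u + v) := by
    intro u v; push_cast; rw [← pow_add]
  have hM : max a a' + (max (a + b) (a' + b') - max a a') = max (a + b) (a' + b') := by
    omega
  ext x
  simp only [Submodule.mem_inf, mem_smul_craigL_iff hn, key, hM]
  constructor
  · rintro ⟨⟨h1, h2⟩, h3, h4⟩
    constructor
    · rcases max_choice a a' with h | h <;> rw [h]
      · exact h1
      · exact h3
    · intro j hj
      rcases max_choice (a + b) (a' + b') with h | h <;> rw [h]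
      · exact h2 j hj
      · exact h4 j hj
  · rintro ⟨h1, h2⟩
    exact ⟨⟨pow_div_lemma p (le_max_left a a') h1,
        fun j hj => pow_div_lemma p (le_max_left (a + b) (a' + b')) (h2 j hj)⟩,
      pow_div_lemma p (le_max_right a a') h1,
        fun j hj => pow_div_lemma p (le_max_right (a + b) (a' + b')) (h2 j hj)⟩
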